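/- For triples of positive integers satisfying the Markov equation a² + b² + c² = 3abc, the mutation (a,b,c) ↦ (a, b, 3ab - c) produces another solution of the Markov equation, and every solution is obtained from (1,1,1) by a sequence of such mutations and permutations. -/

import Mathlib

/-- One elementary move on Markov triples: mutate the last coordinate
`(a,b,c) ↦ (a,b,3ab-c)`, or apply a transposition (these generate all
permutations). -/
def markovStep : ℤ × ℤ × ℤ → ℤ × ℤ × ℤ → Prop :=
  fun t t' => t' = (t.1, t.2.1, 3 * t.1 * t.2.1 - t.2.2) ∨
    t' = (t.2.1, t.1, t.2.2) ∨ t' = (t.1, t.2.2, t.2.1)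

lemma mutate_sol (a b c : ℤ) (ha : 0 < a) (hb : 0 < b) (hc : 0 < c)
    (h : a^2 + b^2 + c^2 = 3*a*b*c) :
    0 < 3*a*b - c ∧ a^2 + b^2 + (3*a*b - c)^2 = 3*a*b*(3*a*b - c) := by
  constructor
  · by_contra h'
    push_neg at h'
    nlinarith [sq_nonneg a, sq_nonneg b, mul_pos ha hb]
  · linear_combination h

lemma step_symm : Symmetric markovStep := by
  intro x y h
  obtain ⟨x1, x2, x3⟩ := x
  rcases h with h | h | h <;> subst h <;> simp [markovStep]

lemma swap12 (x y z : ℤ) : markovStep (x,y,z) (y,x,z) := Or.inr (Or.inl rfl)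
lemma swap23 (x y z : ℤ) : markovStep (x,y,z) (x,z,y) := Or.inr (Or.inr rfl)
lemma mutStep (x y z : ℤ) : markovStep (x,y,z) (x,y,3*x*y-z) := Or.inl rfl

lemma markov_max_eq_one (a b c : ℤ) (hab : a ≤ b) (hbc : b ≤ c)
    (ha : 0 < a) (hb : 0 < b) (hc : 0 < c)
    (h : a^2 + b^2 + c^2 = 3*a*b*c) (hge : c ≤ 3*a*b - c) :
    a = 1 ∧ b = 1 ∧ c = 1 := by
  have h2 : c^2 ≤ a^2 + b^2 := by nlinarith
  have ha1 : a = 1 := by nlinarith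
  subst ha1
  have hcb : c ≤ b := by nlinarith
  have hb1 : b = c := le_antisymm hbc hcb
  subst hb1
  have : b = 1 := by nlinarith
  exact ⟨rfl, this, this ▸ rfl⟩

lemma reach (n : ℕ) : ∀ a b c : ℤ, 0 < a → 0 < b → 0 < c →
    a^2 + b^2 + c^2 = 3*a*b*c → a + b + c ≤ n →
    Relation.ReflTransGen markovStep (a, b, c) (1, 1, 1) := by
  induction n with
  | zero => intro a b c ha hb hc _ hs; exfalso; push_cast at hs; omega
  | succ n ih =>
    have key : ∀ a b c : ℤ, a ≤ b → b ≤ c → 0 < a → 0 < b → 0 < c →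
        a^2 + b^2 + c^2 = 3*a*b*c → a + b + c ≤ (n+1 : ℕ) →
        Relation.ReflTransGen markovStep (a, b, c) (1, 1, 1) := by
      intro a b c hab hbc ha hb hc h hs
      rcases le_or_gt c (3*a*b - c) with hge | hlt
      · obtain ⟨h1, h2, h3⟩ := markov_max_eq_one a b c hab hbc ha hb hc h hge
        subst h1; subst h2; subst h3; exact Relation.ReflTransGen.refl
      · obtain ⟨hpos, heq⟩ := mutate_sol a b c ha hb hc h
        have hs' : a + b + (3*a*b - c) ≤ n := by push_cast at hs ⊢; omega
        exact Relation.ReflTransGen.head (mutStep a b c)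
          (ih a b (3*a*b-c) ha hb hpos heq hs')
    intro a b c ha hb hc h hs
    rcases le_total a b with hab | hba
    · rcases le_total b c with hbc | hcb
      · exact key a b c hab hbc ha hb hc h hs
      · rcases le_total a c with hac | hca
        · exact Relation.ReflTransGen.head (swap23 a b c)
            (key a c b hac hcb ha hc hb (by linear_combination h) (by linarith))
        · exact Relation.ReflTransGen.head (swap23 a b c)
            (Relation.ReflTransGen.head (swap12 a c b)
              (key c a b hca hab hc ha hb (by linear_combination h) (by linarith)))
    · rcases le_total a c with hac | hca
      · exact Relation.ReflTransGen.head (swap12 a b c)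
          (key b a c hba hac hb ha hc (by linear_combination h) (by linarith))
      · rcases le_total b c with hbc | hcb
        · exact Relation.ReflTransGen.head (swap12 a b c)
            (Relation.ReflTransGen.head (swap23 b a c)
              (key b c a hbc hca hb hc ha (by linear_combination h) (by linarith)))
        · exact Relation.ReflTransGen.head (swap23 a b c)
            (Relation.ReflTransGen.head (swap12 a c b)
              (Relation.ReflTransGen.head (swap23 c a b)
                (key c b a hcb hba hc hb ha (by linear_combination h) (by linarith))))

/-- For positive integer solutions of the Markov equation `a² + b² + c² = 3abc`,
the mutation `(a,b,c) ↦ (a,b,3ab-c)` produces another positive solution, and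
every solution is obtained from `(1,1,1)` by a sequence of such mutations and
permutations. -/
theorem stmt10 :
    (∀ a b c : ℤ, 0 < a → 0 < b → 0 < c → a^2 + b^2 + c^2 = 3*a*b*c →
      0 < 3*a*b - c ∧ a^2 + b^2 + (3*a*b - c)^2 = 3*a*b*(3*a*b - c)) ∧
    (∀ a b c : ℤ, 0 < a → 0 < b → 0 < c → a^2 + b^2 + c^2 = 3*a*b*c →
      Relation.ReflTransGen markovStep (1, 1, 1) (a, b, c)) := by
  constructor
  · exact mutate_sol
  · intro a b c ha hb hc h
    have := reach (a+b+c).toNat a b c ha hb hc h (by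
      have h0 : (0:ℤ) ≤ a + b + c := by linarith
      rw [Int.toNat_of_nonneg h0])
    haveI hsymm : Std.Symm markovStep := ⟨fun _ _ h => step_symm h⟩
    exact Std.Symm.symm _ _ this
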